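/- Let D ≥ 3. Every melonic closed graph is connected and has degree zero: if G is obtained from the two-vertex graph (k = 1, all σ_c equal to the identity of Fin 1) by finitely many insertions of fundamental melons on edges, then G is connected and ω(G) = 0. -/

import Mathlib

open scoped Classical

noncomputable section

/-- Number of cycles of a permutation of `Fin k`, counting fixed points
as cycles of length 1. -/
def numCycles {k : ℕ} (τ : Equiv.Perm (Fin k)) : ℕ :=
  τ.cycleType.card + (Finset.univ.filter fun i => τ i = i).card

/-- `F^{c₁c₂}(G)`: the number of faces with colors `c₁c₂`, i.e. the number of
cycles of `(σ c₂)⁻¹ * σ c₁` (fixed points counting as cycles of length 1). -/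
def faceCount (D k : ℕ) (σ : Fin (D + 1) → Equiv.Perm (Fin k)) (c₁ c₂ : Fin (D + 1)) : ℕ :=
  numCycles ((σ c₂)⁻¹ * σ c₁)

/-- `F(G)`: total number of faces. -/
def totalFaces (D k : ℕ) (σ : Fin (D + 1) → Equiv.Perm (Fin k)) : ℕ :=
  ∑ p ∈ Finset.univ.filter (fun p : Fin (D + 1) × Fin (D + 1) => p.1 < p.2),
    faceCount D k σ p.1 p.2

/-- The degree `ω(G) := ((D−1)!/2) · (D + (D(D−1)/2)·k − F(G))`. -/
def degree (D k : ℕ) (σ : Fin (D + 1) → Equiv.Perm (Fin k)) : ℚ :=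
  ((D - 1).factorial : ℚ) / 2 *
    ((D : ℚ) + (D : ℚ) * ((D : ℚ) - 1) / 2 * (k : ℚ) - (totalFaces D k σ : ℚ))

/-- `G` is connected: the subgroup generated by the `(σ c')⁻¹ * σ c` acts
transitively on `Fin k`. -/
def Connected (D k : ℕ) (σ : Fin (D + 1) → Equiv.Perm (Fin k)) : Prop :=
  ∀ i j : Fin k, ∃ g ∈ Subgroup.closure
    {g : Equiv.Perm (Fin k) | ∃ c c' : Fin (D + 1), g = (σ c')⁻¹ * σ c}, g i = j

/-- A permutation of `Fin m` which is a single `m`-cycle. -/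
def IsFullCycle {m : ℕ} (π : Equiv.Perm (Fin m)) : Prop :=
  π.IsCycle ∧ π.support = Finset.univ

/-- `Φ_π(G) := Σ_{q=0}^{D} F^{π^q(0), π^{q+1}(0)}(G)`, the face count of the
jacket associated to the `(D+1)`-cycle `π` on the colors. -/
def jacketFaces (D k : ℕ) (σ : Fin (D + 1) → Equiv.Perm (Fin k))
    (π : Equiv.Perm (Fin (D + 1))) : ℕ :=
  ∑ q ∈ Finset.range (D + 1), faceCount D k σ ((π ^ q) 0) ((π ^ (q + 1)) 0)

/-- `g_π(G) := (2 + (D−1)·k − Φ_π(G))/2`, the genus of the jacket of `π`. -/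
def jacketGenus (D k : ℕ) (σ : Fin (D + 1) → Equiv.Perm (Fin k))
    (π : Equiv.Perm (Fin (D + 1))) : ℚ :=
  (2 + ((D : ℚ) - 1) * (k : ℚ) - (jacketFaces D k σ π : ℚ)) / 2

/-- The number of cycles of length `s` of a permutation of `Fin k`
(fixed points counting as cycles of length 1). -/
def numCyclesLen {k : ℕ} (τ : Equiv.Perm (Fin k)) (s : ℕ) : ℕ :=
  if s = 1 then (Finset.univ.filter fun i => τ i = i).card else τ.cycleType.count s

/-- `F_s(G)`: the number of faces of `G` with `2s` vertices. -/
def facesLen (D k : ℕ) (σ : Fin (D + 1) → Equiv.Perm (Fin k)) (s : ℕ) : ℕ :=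
  ∑ p ∈ Finset.univ.filter (fun p : Fin (D + 1) × Fin (D + 1) => p.1 < p.2),
    numCyclesLen ((σ p.2)⁻¹ * σ p.1) s

/-- `τ` (on `Fin (k+1)`) is obtained from `σ` (on `Fin k`) by the insertion of a fundamental
melon on the edge of some color `c₀` at some black vertex `i₀`: for `c ≠ c₀` the permutation
`τ c` agrees with `σ c` on `Fin k` and fixes the new point, while `τ c₀` sends `i₀` to the
new point, the new point to `σ c₀ i₀`, and agrees with `σ c₀` elsewhere. -/
def IsMelonInsertion (D k : ℕ) (σ : Fin (D + 1) → Equiv.Perm (Fin k))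
    (τ : Fin (D + 1) → Equiv.Perm (Fin (k + 1))) : Prop :=
  ∃ (c₀ : Fin (D + 1)) (i₀ : Fin k),
    (∀ c : Fin (D + 1), c ≠ c₀ →
      (∀ i : Fin k, τ c i.castSucc = (σ c i).castSucc) ∧ τ c (Fin.last k) = Fin.last k) ∧
    τ c₀ i₀.castSucc = Fin.last k ∧
    τ c₀ (Fin.last k) = (σ c₀ i₀).castSucc ∧
    ∀ i : Fin k, i ≠ i₀ → τ c₀ i.castSucc = (σ c₀ i).castSucc

/-- The melonic closed graphs: the smallest family of closed bipartite `(D+1)`-colored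
graphs containing the two-vertex graph (`k = 1`, all `σ c` the identity of `Fin 1`) and
closed under insertion of fundamental melons on edges. -/
inductive Melonic (D : ℕ) : ∀ k : ℕ, (Fin (D + 1) → Equiv.Perm (Fin k)) → Prop
  | base : Melonic D 1 (fun _ => 1)
  | insert {k : ℕ} {σ : Fin (D + 1) → Equiv.Perm (Fin k)}
      {τ : Fin (D + 1) → Equiv.Perm (Fin (k + 1))} :
      Melonic D k σ → IsMelonInsertion D k σ τ → Melonic D (k + 1) τ


theorem Equiv.Perm.apply_inv_self {α : Type*} (f : Equiv.Perm α) (x : α) : f (f⁻¹ x) = x :=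
  f.apply_symm_apply x

theorem Equiv.Perm.inv_apply_self {α : Type*} (f : Equiv.Perm α) (x : α) : f⁻¹ (f x) = x :=
  f.symm_apply_apply x

section AuxLemmas

open Equiv Equiv.Perm Finset

lemma card_fixedPoints {n : ℕ} (f : Equiv.Perm (Fin n)) :
    (Finset.univ.filter fun x => f x = x).card = n - f.support.card := by
  have h1 : (Finset.univ.filter fun x => f x = x) = f.supportᶜ := by
    ext x
    simp [Equiv.Perm.mem_support]
  rw [h1, Finset.card_compl, Fintype.card_fin]

lemma support_card_le {n : ℕ} (f : Equiv.Perm (Fin n)) : f.support.card ≤ n := by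
  simpa using Finset.card_le_univ f.support

lemma isCycle_mul_swap {n : ℕ} {c : Equiv.Perm (Fin n)} {a b : Fin n} (hc : c.IsCycle)
    (ha : a ∈ c.support) (hb : b ∉ c.support) :
    (c * Equiv.swap a b).IsCycle ∧ (c * Equiv.swap a b).support = insert b c.support := by
  have hab : a ≠ b := fun h => hb (h ▸ ha)
  have hca : c a ≠ a := Equiv.Perm.mem_support.1 ha
  have hcb : c b = b := Equiv.Perm.notMem_support.1 hb
  set g := c * Equiv.swap a b with hg
  have hgb : g b = c a := by
    simp [hg, Equiv.Perm.mul_apply, Equiv.swap_apply_right]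
  have hcab : c a ≠ b := fun h => hb (h ▸ (Equiv.Perm.apply_mem_support.2 ha))
  have hga : g a = b := by
    simp [hg, Equiv.Perm.mul_apply, Equiv.swap_apply_left, hcb]
  have hgx : ∀ x, x ≠ a → x ≠ b → g x = c x := by
    intro x hxa hxb
    simp [hg, Equiv.Perm.mul_apply, Equiv.swap_apply_of_ne_of_ne hxa hxb]
  have hsupp : g.support = insert b c.support := by
    ext x
    rw [Equiv.Perm.mem_support, Finset.mem_insert]
    by_cases hxb : x = b
    · subst hxb
      simp [hgb, hcab]
    · by_cases hxa : x = a
      · subst hxa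
        simp [hga, Ne.symm hab, ha]
      · rw [hgx x hxa hxb]
        simp [hxb, Equiv.Perm.mem_support]
  have horder : 1 ≤ orderOf c := orderOf_pos c
  have hpow : ∀ j, 1 ≤ j → j ≤ orderOf c → (g ^ j) b = (c ^ j) a := by
    intro j
    induction j with
    | zero => intro h1 _; exact absurd h1 (by omega)
    | succ j ih =>
      intro _ hj2
      by_cases hj0 : j = 0
      · subst hj0; simpa using hgb
      · have hj1 : 1 ≤ j := Nat.one_le_iff_ne_zero.2 hj0
        have hjlt : j < orderOf c := by omega
        have ihv := ih hj1 hjlt.le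
        have hcja : (c ^ j) a ≠ a := by
          intro hfix
          have h1 : c ^ j = 1 := (hc.pow_eq_one_iff' hca).2 hfix
          have h2 := orderOf_dvd_of_pow_eq_one h1
          have h3 := Nat.le_of_dvd (by omega) h2
          omega
        have hcjb : (c ^ j) a ≠ b := fun h => hb (h ▸ (Equiv.Perm.pow_apply_mem_support.2 ha))
        have e1 : (g ^ (j + 1)) b = g ((g ^ j) b) := by
          rw [show j + 1 = 1 + j from by omega, pow_add, pow_one, Equiv.Perm.mul_apply]
        have e2 : (c ^ (j + 1)) a = c ((c ^ j) a) := by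
          rw [show j + 1 = 1 + j from by omega, pow_add, pow_one, Equiv.Perm.mul_apply]
        rw [e1, e2, ihv, hgx _ hcja hcjb]
  refine ⟨⟨b, by rw [hgb]; exact hcab, ?_⟩, hsupp⟩
  intro y hy
  have hy' : y ∈ g.support := Equiv.Perm.mem_support.2 hy
  rw [hsupp, Finset.mem_insert] at hy'
  rcases hy' with rfl | hyc
  · exact Equiv.Perm.SameCycle.refl g y
  · have hcy : c y ≠ y := Equiv.Perm.mem_support.1 hyc
    have hsc : c.SameCycle a y := hc.sameCycle hca hcy
    obtain ⟨i, hi0, hile, hia⟩ := hsc.exists_pow_eq''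
    refine ⟨(i : ℤ), ?_⟩
    rw [zpow_natCast, hpow i hi0 hile, hia]

lemma numCycles_mul_swap {n : ℕ} (f : Equiv.Perm (Fin n)) (a b : Fin n)
    (hab : a ≠ b) (hb : f b = b) :
    numCycles f = numCycles (f * Equiv.swap a b) + 1 := by
  have hbs : b ∉ f.support := Equiv.Perm.notMem_support.2 hb
  unfold numCycles
  rw [_root_.card_fixedPoints, _root_.card_fixedPoints]
  by_cases ha : f a = a
  · have has : a ∉ f.support := Equiv.Perm.notMem_support.2 ha
    have hd : f.Disjoint (Equiv.swap a b) := by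
      intro x
      by_cases hxa : x = a
      · exact Or.inl (by rw [hxa]; exact ha)
      · by_cases hxb : x = b
        · exact Or.inl (by rw [hxb]; exact hb)
        · exact Or.inr (Equiv.swap_apply_of_ne_of_ne hxa hxb)
    have hct : (f * Equiv.swap a b).cycleType = f.cycleType + {2} := by
      rw [hd.cycleType_mul, (Equiv.Perm.isCycle_swap hab).cycleType,
        Equiv.Perm.card_support_swap hab]
    have hs : (f * Equiv.swap a b).support = f.support ∪ {a, b} := by
      rw [hd.support_mul, Equiv.Perm.support_swap hab]
    have hdisj : _root_.Disjoint f.support ({a, b} : Finset (Fin n)) := by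
      rw [Finset.disjoint_right]
      intro x hx
      simp only [Finset.mem_insert, Finset.mem_singleton] at hx
      rcases hx with rfl | rfl <;> assumption
    have hcard : (f * Equiv.swap a b).support.card = f.support.card + 2 := by
      rw [hs, Finset.card_union_of_disjoint hdisj, Finset.card_pair hab]
    have hle := support_card_le (f * Equiv.swap a b)
    have hle2 : f.support.card + 2 ≤ n := hcard ▸ hle
    rw [hct, hcard]
    simp only [Multiset.card_add, Multiset.card_singleton]
    omega
  · have has : a ∈ f.support := Equiv.Perm.mem_support.2 ha
    set c := f.cycleOf a with hcdef
    have hc : c.IsCycle := Equiv.Perm.isCycle_cycleOf f ha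
    set h := c⁻¹ * f with hhdef
    have hfactor : f = c * h := by rw [hhdef]; group
    have hsame_fix : ∀ x, f.SameCycle a x → h x = x := by
      intro x hx
      have h1 : c x = f x := hx.cycleOf_apply
      show c⁻¹ (f x) = x
      exact Equiv.Perm.inv_eq_iff_eq.2 h1.symm
    have hnot_fix : ∀ x, ¬ f.SameCycle a x → h x = f x := by
      intro x hx
      have h1 : c (f x) = f x :=
        Equiv.Perm.cycleOf_apply_of_not_sameCycle
          (by rwa [Equiv.Perm.sameCycle_apply_right])
      show c⁻¹ (f x) = f x
      exact Equiv.Perm.inv_eq_iff_eq.2 h1.symm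
    have hsupp_c : ∀ x, x ∈ c.support ↔ f.SameCycle a x := by
      intro x
      rw [hcdef, Equiv.Perm.mem_support_cycleOf_iff]
      simp [has]
    have hsupp_h : ∀ x, x ∈ h.support ↔ x ∈ f.support ∧ ¬ f.SameCycle a x := by
      intro x
      by_cases hx : f.SameCycle a x
      · simp [Equiv.Perm.mem_support, hsame_fix x hx, hx]
      · simp [Equiv.Perm.mem_support, hnot_fix x hx, hx]
    have hdch : c.Disjoint h := by
      intro x
      by_cases hx : f.SameCycle a x
      · exact Or.inr (hsame_fix x hx)
      · exact Or.inl (Equiv.Perm.cycleOf_apply_of_not_sameCycle hx)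
    have hbc : b ∉ c.support := fun hx => hbs (Equiv.Perm.support_cycleOf_le f a hx)
    have hac : a ∈ c.support := (hsupp_c a).2 (Equiv.Perm.SameCycle.refl f a)
    obtain ⟨hgc, hgs⟩ := isCycle_mul_swap hc hac hbc
    have hd_swap_h : (Equiv.swap a b).Disjoint h := by
      intro x
      by_cases hxa : x = a
      · right; rw [hxa]; exact hsame_fix a (Equiv.Perm.SameCycle.refl f a)
      · by_cases hxb : x = b
        · right; rw [hxb]
          by_cases hsc : f.SameCycle a b
          · exact hsame_fix b hsc
          · rw [hnot_fix b hsc]; exact hb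
        · exact Or.inl (Equiv.swap_apply_of_ne_of_ne hxa hxb)
    have hfs : f * Equiv.swap a b = (c * Equiv.swap a b) * h := by
      have hcomm : Equiv.swap a b * (c⁻¹ * f) = (c⁻¹ * f) * Equiv.swap a b := by
        have := hd_swap_h.commute.eq
        rwa [hhdef] at this
      rw [hhdef]
      calc f * Equiv.swap a b = c * ((c⁻¹ * f) * Equiv.swap a b) := by group
        _ = c * (Equiv.swap a b * (c⁻¹ * f)) := by rw [hcomm]
        _ = (c * Equiv.swap a b) * (c⁻¹ * f) := by rw [← mul_assoc]
    have hdgh : (c * Equiv.swap a b).Disjoint h := by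
      intro x
      by_cases hx : x ∈ h.support
      · left
        obtain ⟨hxf, hxs⟩ := (hsupp_h x).1 hx
        have hxa : x ≠ a := fun e => hxs (by rw [e])
        have hxb : x ≠ b := fun e => hbs (e ▸ hxf)
        have hcx : c x = x := Equiv.Perm.cycleOf_apply_of_not_sameCycle hxs
        rw [Equiv.Perm.mul_apply, Equiv.swap_apply_of_ne_of_ne hxa hxb, hcx]
      · exact Or.inr (Equiv.Perm.notMem_support.1 hx)
    have hct_f : f.cycleType = {c.support.card} + h.cycleType := by
      rw [hfactor, hdch.cycleType_mul, hc.cycleType]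
    have hct_g : (f * Equiv.swap a b).cycleType
        = {(c * Equiv.swap a b).support.card} + h.cycleType := by
      rw [hfs, hdgh.cycleType_mul, hgc.cycleType]
    have hsupp_f : f.support = c.support ∪ h.support := by
      rw [hfactor, hdch.support_mul]
    have hsupp_g : (f * Equiv.swap a b).support = insert b f.support := by
      rw [hfs, hdgh.support_mul, hgs, hsupp_f, Finset.insert_union]
    have hcard_g : (f * Equiv.swap a b).support.card = f.support.card + 1 := by
      rw [hsupp_g, Finset.card_insert_of_notMem hbs]
    have hle := support_card_le (f * Equiv.swap a b)
    have hle2 : f.support.card + 1 ≤ n := hcard_g ▸ hle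
    rw [hct_f, hct_g, hcard_g]
    simp only [Multiset.card_add, Multiset.card_singleton]
    omega

lemma numCycles_extend {k : ℕ} (ρ : Equiv.Perm (Fin k)) (ρ' : Equiv.Perm (Fin (k + 1)))
    (h1 : ∀ i : Fin k, ρ' i.castSucc = (ρ i).castSucc) (h2 : ρ' (Fin.last k) = Fin.last k) :
    numCycles ρ' = numCycles ρ + 1 := by
  classical
  have hct : ρ'.cycleType = ρ.cycleType := by
    let e : Fin k ≃ {x : Fin (k + 1) // x ∈ Set.range (Fin.castSucc : Fin k → Fin (k + 1))} :=
      Equiv.ofInjective _ (Fin.castSucc_injective k)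
    have hcoe : ∀ j : Fin k, (e j : Fin (k + 1)) = j.castSucc := fun j => rfl
    have hρ' : ρ' = ρ.extendDomain e := by
      apply Equiv.ext
      intro x
      induction x using Fin.lastCases with
      | last =>
        have hnot : ¬ ((Fin.last k) ∈ Set.range (Fin.castSucc : Fin k → Fin (k + 1))) := by
          rintro ⟨i, hi⟩
          exact (Fin.castSucc_lt_last i).ne hi
        rw [h2, Equiv.Perm.extendDomain_apply_not_subtype ρ e hnot]
      | cast i =>
        rw [h1 i]
        have himg := Equiv.Perm.extendDomain_apply_image ρ e i
        rw [hcoe, hcoe] at himg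
        exact himg.symm
    rw [hρ', Equiv.Perm.cycleType_extendDomain]
  have hfix : (Finset.univ.filter fun x : Fin (k + 1) => ρ' x = x)
      = insert (Fin.last k)
        ((Finset.univ.filter fun i : Fin k => ρ i = i).image Fin.castSucc) := by
    ext x
    induction x using Fin.lastCases with
    | last =>
      simp [h2]
    | cast i =>
      simp only [Finset.mem_filter, Finset.mem_univ, true_and, Finset.mem_insert,
        Finset.mem_image, h1 i]
      constructor
      · intro hx
        exact Or.inr ⟨i, Fin.castSucc_injective k hx, rfl⟩
      · rintro (hlast | ⟨j, hj, hjc⟩)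
        · exact absurd hlast.symm (Fin.castSucc_lt_last i).ne.symm
        · have : j = i := Fin.castSucc_injective k hjc
          subst this
          rw [hj]
  have hlast_not : Fin.last k ∉
      ((Finset.univ.filter fun i : Fin k => ρ i = i).image Fin.castSucc) := by
    simp only [Finset.mem_image]
    rintro ⟨j, _, hj⟩
    exact (Fin.castSucc_lt_last j).ne hj
  unfold numCycles
  rw [hct, hfix, Finset.card_insert_of_notMem hlast_not,
    Finset.card_image_of_injective _ (Fin.castSucc_injective k)]
  omega

lemma numCycles_insert {k : ℕ} (ρ : Equiv.Perm (Fin k)) (ρ' : Equiv.Perm (Fin (k + 1)))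
    (i₀ : Fin k)
    (h1 : ρ' i₀.castSucc = Fin.last k) (h2 : ρ' (Fin.last k) = (ρ i₀).castSucc)
    (h3 : ∀ i : Fin k, i ≠ i₀ → ρ' i.castSucc = (ρ i).castSucc) :
    numCycles ρ' = numCycles ρ := by
  have hab : (i₀.castSucc : Fin (k + 1)) ≠ Fin.last k := (Fin.castSucc_lt_last i₀).ne
  have hfb : (ρ' * Equiv.swap i₀.castSucc (Fin.last k)) (Fin.last k) = Fin.last k := by
    rw [Equiv.Perm.mul_apply, Equiv.swap_apply_right, h1]
  have hext : numCycles (ρ' * Equiv.swap i₀.castSucc (Fin.last k)) = numCycles ρ + 1 := by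
    apply numCycles_extend
    · intro i
      by_cases hi : i = i₀
      · rw [hi, Equiv.Perm.mul_apply, Equiv.swap_apply_left, h2]
      · have hca : i.castSucc ≠ i₀.castSucc := fun e => hi (Fin.castSucc_injective k e)
        have hcb : i.castSucc ≠ Fin.last k := (Fin.castSucc_lt_last i).ne
        rw [Equiv.Perm.mul_apply, Equiv.swap_apply_of_ne_of_ne hca hcb, h3 i hi]
    · exact hfb
  have hkey := numCycles_mul_swap (ρ' * Equiv.swap i₀.castSucc (Fin.last k))
    i₀.castSucc (Fin.last k) hab hfb
  have hfs : (ρ' * Equiv.swap i₀.castSucc (Fin.last k)) * Equiv.swap i₀.castSucc (Fin.last k)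
      = ρ' := by
    rw [mul_assoc, Equiv.swap_mul_self, mul_one]
  rw [hfs] at hkey
  omega

lemma faceCount_step {D k : ℕ} {σ : Fin (D + 1) → Equiv.Perm (Fin k)}
    {τ : Fin (D + 1) → Equiv.Perm (Fin (k + 1))} (c₀ : Fin (D + 1)) (i₀ : Fin k)
    (hne : ∀ c, c ≠ c₀ →
      (∀ i : Fin k, τ c i.castSucc = (σ c i).castSucc) ∧ τ c (Fin.last k) = Fin.last k)
    (h1 : τ c₀ i₀.castSucc = Fin.last k)
    (h2 : τ c₀ (Fin.last k) = (σ c₀ i₀).castSucc)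
    (h3 : ∀ i, i ≠ i₀ → τ c₀ i.castSucc = (σ c₀ i).castSucc)
    (c₁ c₂ : Fin (D + 1)) (hcc : c₁ ≠ c₂) :
    faceCount D (k + 1) τ c₁ c₂
      = faceCount D k σ c₁ c₂ + (if c₁ ≠ c₀ ∧ c₂ ≠ c₀ then 1 else 0) := by
  have hinv : ∀ c, c ≠ c₀ → ∀ j : Fin k, (τ c)⁻¹ (j.castSucc) = ((σ c)⁻¹ j).castSucc := by
    intro c hc j
    apply Equiv.Perm.inv_eq_iff_eq.2
    rw [(hne c hc).1, Equiv.Perm.apply_inv_self]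
  have hinvlast : ∀ c, c ≠ c₀ → (τ c)⁻¹ (Fin.last k) = Fin.last k := fun c hc =>
    Equiv.Perm.inv_eq_iff_eq.2 (hne c hc).2.symm
  have hinv₀a : (τ c₀)⁻¹ (Fin.last k) = i₀.castSucc := Equiv.Perm.inv_eq_iff_eq.2 h1.symm
  have hinv₀b : (τ c₀)⁻¹ ((σ c₀ i₀).castSucc) = Fin.last k := Equiv.Perm.inv_eq_iff_eq.2 h2.symm
  have hinv₀c : ∀ w, w ≠ i₀ → (τ c₀)⁻¹ ((σ c₀ w).castSucc) = w.castSucc := fun w hw =>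
    Equiv.Perm.inv_eq_iff_eq.2 (h3 w hw).symm
  unfold faceCount
  by_cases hc₁ : c₁ = c₀
  · by_cases hc₂ : c₂ = c₀
    · exact absurd (hc₁.trans hc₂.symm) hcc
    · subst hc₁
      have hmain := numCycles_insert ((σ c₂)⁻¹ * σ c₁) ((τ c₂)⁻¹ * τ c₁) i₀
        (by rw [Equiv.Perm.mul_apply, h1, hinvlast c₂ hc₂])
        (by rw [Equiv.Perm.mul_apply, h2, hinv c₂ hc₂, Equiv.Perm.mul_apply])
        (by intro i hi
            rw [Equiv.Perm.mul_apply, h3 i hi, hinv c₂ hc₂, Equiv.Perm.mul_apply])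
      rw [hmain]
      simp
  · by_cases hc₂ : c₂ = c₀
    · subst hc₂
      set ρ := (σ c₂)⁻¹ * σ c₁ with hρ
      set j₀ := (σ c₁)⁻¹ ((σ c₂) i₀) with hj₀
      have hσj₀ : σ c₁ j₀ = σ c₂ i₀ := Equiv.Perm.apply_inv_self _ _
      have hρj₀ : ρ j₀ = i₀ := by
        rw [hρ, Equiv.Perm.mul_apply, hσj₀, Equiv.Perm.inv_apply_self]
      have hmain := numCycles_insert ρ ((τ c₂)⁻¹ * τ c₁) j₀
        (by rw [Equiv.Perm.mul_apply, (hne c₁ hc₁).1, hσj₀, hinv₀b])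
        (by rw [Equiv.Perm.mul_apply, (hne c₁ hc₁).2, hinv₀a, hρj₀])
        (by
          intro i hi
          have hw : ρ i ≠ i₀ := fun e => hi (ρ.injective (e.trans hρj₀.symm))
          have hσeq : σ c₂ (ρ i) = σ c₁ i := by
            rw [hρ, Equiv.Perm.mul_apply, Equiv.Perm.apply_inv_self]
          rw [Equiv.Perm.mul_apply, (hne c₁ hc₁).1, ← hσeq, hinv₀c (ρ i) hw])
      rw [hmain]
      simp
    · have hmain := numCycles_extend ((σ c₂)⁻¹ * σ c₁) ((τ c₂)⁻¹ * τ c₁)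
        (by intro i
            rw [Equiv.Perm.mul_apply, (hne c₁ hc₁).1, hinv c₂ hc₂, Equiv.Perm.mul_apply])
        (by rw [Equiv.Perm.mul_apply, (hne c₁ hc₁).2, hinvlast c₂ hc₂])
      rw [hmain]
      simp [hc₁, hc₂]

lemma two_mul_card_ltPairs (n : ℕ) :
    2 * ((Finset.univ : Finset (Fin n × Fin n)).filter fun p => p.1 < p.2).card
      = n * (n - 1) := by
  classical
  set S := (Finset.univ : Finset (Fin n × Fin n)).filter (fun p => p.1 < p.2) with hS
  set T := (Finset.univ : Finset (Fin n × Fin n)).filter (fun p => p.2 < p.1) with hT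
  have hST : S.card = T.card := by
    apply Finset.card_bij (fun p _ => p.swap)
    · intro p hp
      simp only [hS, hT, Finset.mem_filter, Finset.mem_univ, true_and] at hp ⊢
      exact hp
    · intro p1 _ p2 _ he
      exact Prod.swap_injective he
    · intro p hp
      refine ⟨p.swap, ?_, Prod.swap_swap p⟩
      simp only [hS, hT, Finset.mem_filter, Finset.mem_univ, true_and] at hp ⊢
      exact hp
  have hUnion : S ∪ T = (Finset.univ : Finset (Fin n)).offDiag := by
    ext p
    simp only [hS, hT, Finset.mem_union, Finset.mem_filter, Finset.mem_univ, true_and,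
      Finset.mem_offDiag]
    constructor
    · rintro (h | h)
      · exact h.ne
      · exact h.ne'
    · intro h
      exact h.lt_or_gt
  have hdisj : _root_.Disjoint S T := by
    rw [Finset.disjoint_left]
    intro p hp hp'
    simp only [hS, hT, Finset.mem_filter, Finset.mem_univ, true_and] at hp hp'
    exact absurd hp' (not_lt.2 hp.le)
  have hcard : S.card + T.card = n * n - n := by
    rw [← Finset.card_union_of_disjoint hdisj, hUnion, Finset.offDiag_card]
    simp [Finset.card_univ]
  have hmul : n * (n - 1) = n * n - n := by
    cases n with
    | zero => rfl
    | succ m => rw [Nat.succ_sub_one, Nat.mul_succ, Nat.add_sub_cancel]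
  rw [two_mul]
  calc S.card + S.card = S.card + T.card := by rw [hST]
    _ = n * n - n := hcard
    _ = n * (n - 1) := hmul.symm

lemma card_avoidPairs {D : ℕ} (c₀ : Fin (D + 1)) :
    ((Finset.univ : Finset (Fin (D + 1) × Fin (D + 1))).filter
        fun p => p.1 < p.2 ∧ (p.1 ≠ c₀ ∧ p.2 ≠ c₀)).card
      = ((Finset.univ : Finset (Fin D × Fin D)).filter fun p => p.1 < p.2).card := by
  classical
  refine (Finset.card_bij (fun p _ => (c₀.succAbove p.1, c₀.succAbove p.2)) ?_ ?_ ?_).symm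
  · intro p hp
    simp only [Finset.mem_filter, Finset.mem_univ, true_and] at hp ⊢
    exact ⟨Fin.succAbove_lt_succAbove_iff.2 hp, Fin.succAbove_ne c₀ p.1, Fin.succAbove_ne c₀ p.2⟩
  · intro p1 _ p2 _ he
    have h1 := congrArg Prod.fst he
    have h2 := congrArg Prod.snd he
    simp only at h1 h2
    exact Prod.ext ((Fin.strictMono_succAbove c₀).injective h1)
      ((Fin.strictMono_succAbove c₀).injective h2)
  · intro q hq
    simp only [Finset.mem_filter, Finset.mem_univ, true_and] at hq
    obtain ⟨hlt, hq1, hq2⟩ := hq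
    obtain ⟨i, hi⟩ := Fin.exists_succAbove_eq hq1
    obtain ⟨j, hj⟩ := Fin.exists_succAbove_eq hq2
    refine ⟨(i, j), ?_, ?_⟩
    · simp only [Finset.mem_filter, Finset.mem_univ, true_and]
      exact Fin.succAbove_lt_succAbove_iff.1 (by rw [hi, hj]; exact hlt)
    · rw [Prod.ext_iff]
      exact ⟨hi, hj⟩

lemma totalFaces_step {D k : ℕ} {σ : Fin (D + 1) → Equiv.Perm (Fin k)}
    {τ : Fin (D + 1) → Equiv.Perm (Fin (k + 1))} (hins : IsMelonInsertion D k σ τ) :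
    2 * totalFaces D (k + 1) τ = 2 * totalFaces D k σ + D * (D - 1) := by
  classical
  obtain ⟨c₀, i₀, hne, h1, h2, h3⟩ := hins
  have hstep : totalFaces D (k + 1) τ = totalFaces D k σ +
      ((Finset.univ : Finset (Fin (D + 1) × Fin (D + 1))).filter
        fun p => p.1 < p.2 ∧ (p.1 ≠ c₀ ∧ p.2 ≠ c₀)).card := by
    unfold totalFaces
    rw [← Finset.filter_filter, Finset.card_filter, ← Finset.sum_add_distrib (M := ℕ)]
    apply Finset.sum_congr rfl
    intro p hp
    simp only [Finset.mem_filter, Finset.mem_univ, true_and] at hp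
    exact faceCount_step c₀ i₀ hne h1 h2 h3 p.1 p.2 hp.ne
  rw [hstep, Nat.mul_add, card_avoidPairs c₀, two_mul_card_ltPairs]

lemma totalFaces_base (D : ℕ) :
    2 * totalFaces D 1 (fun _ => 1) = (D + 1) * D := by
  classical
  have h1 : ∀ c₁ c₂ : Fin (D + 1), faceCount D 1 (fun _ => (1 : Equiv.Perm (Fin 1))) c₁ c₂ = 1 := by
    intro c₁ c₂
    unfold faceCount numCycles
    simp [Equiv.Perm.cycleType_one]
  have h2 : totalFaces D 1 (fun _ => 1)
      = (Finset.univ.filter (fun p : Fin (D + 1) × Fin (D + 1) => p.1 < p.2)).card := by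
    unfold totalFaces
    rw [Finset.card_eq_sum_ones]
    exact Finset.sum_congr rfl fun (p : Fin (D + 1) × Fin (D + 1)) _ => h1 p.1 p.2
  rw [h2, two_mul_card_ltPairs]
  simp

lemma tot_melonic {D k : ℕ} {σ : Fin (D + 1) → Equiv.Perm (Fin k)}
    (h : Melonic D k σ) :
    2 * totalFaces D k σ = 2 * D + D * (D - 1) * k := by
  induction h with
  | base =>
    rw [totalFaces_base, Nat.mul_one]
    cases D with
    | zero => rfl
    | succ m =>
      rw [Nat.succ_sub_one]
      ring
  | insert hm hins ih =>
    rw [totalFaces_step hins, ih, Nat.mul_succ]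
    set E := D * (D - 1) with hE
    set F := E * k with hF
    omega

lemma conn_step {D k : ℕ} (hD : 3 ≤ D) {σ : Fin (D + 1) → Equiv.Perm (Fin k)}
    {τ : Fin (D + 1) → Equiv.Perm (Fin (k + 1))} (hins : IsMelonInsertion D k σ τ)
    (ih : Connected D k σ) : Connected D (k + 1) τ := by
  classical
  unfold Connected
  obtain ⟨c₀, i₀, hne, h1, h2, h3⟩ := hins
  set Γ := Subgroup.closure
    {g : Equiv.Perm (Fin (k + 1)) | ∃ c c' : Fin (D + 1), g = (τ c')⁻¹ * τ c} with hΓ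
  set O : Set (Fin (k + 1)) := {y | ∃ g ∈ Γ, g (Fin.last k) = y} with hO
  have hGen : ∀ c c' : Fin (D + 1), (τ c')⁻¹ * τ c ∈ Γ := fun c c' =>
    Subgroup.subset_closure ⟨c, c', rfl⟩
  have hlastO : Fin.last k ∈ O := ⟨1, Subgroup.one_mem _, rfl⟩
  have hOmul : ∀ y, y ∈ O → ∀ g, g ∈ Γ → g y ∈ O := by
    rintro y ⟨h, hh, hhy⟩ g hg
    exact ⟨g * h, Subgroup.mul_mem _ hg hh, by rw [Equiv.Perm.mul_apply, hhy]⟩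
  obtain ⟨c₁, hc₁⟩ : ∃ c : Fin (D + 1), c ≠ c₀ := by
    have : Nontrivial (Fin (D + 1)) := Fin.nontrivial_iff_two_le.2 (by omega)
    exact exists_ne c₀
  have hinv : ∀ c, c ≠ c₀ → ∀ j : Fin k, (τ c)⁻¹ (j.castSucc) = ((σ c)⁻¹ j).castSucc := by
    intro c hc j
    apply Equiv.Perm.inv_eq_iff_eq.2
    rw [(hne c hc).1, Equiv.Perm.apply_inv_self]
  have hinvlast : ∀ c, c ≠ c₀ → (τ c)⁻¹ (Fin.last k) = Fin.last k := fun c hc =>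
    Equiv.Perm.inv_eq_iff_eq.2 (hne c hc).2.symm
  have hinv₀a : (τ c₀)⁻¹ (Fin.last k) = i₀.castSucc := Equiv.Perm.inv_eq_iff_eq.2 h1.symm
  have hinv₀c : ∀ w, w ≠ i₀ → (τ c₀)⁻¹ ((σ c₀ w).castSucc) = w.castSucc := fun w hw =>
    Equiv.Perm.inv_eq_iff_eq.2 (h3 w hw).symm
  have hi₀O : (i₀.castSucc : Fin (k + 1)) ∈ O := by
    refine ⟨((τ c₁)⁻¹ * τ c₀)⁻¹, Subgroup.inv_mem _ (hGen c₀ c₁), ?_⟩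
    apply Equiv.Perm.inv_eq_iff_eq.2
    rw [Equiv.Perm.mul_apply, h1]
    exact (hinvlast c₁ hc₁).symm
  have hval1 : ∀ c', c' ≠ c₀ →
      ((τ c')⁻¹ * τ c₀) (Fin.last k) = (((σ c')⁻¹ * σ c₀) i₀).castSucc := by
    intro c' hc'
    rw [Equiv.Perm.mul_apply, h2, hinv c' hc', Equiv.Perm.mul_apply]
  have hval2 : ∀ c', c' ≠ c₀ → ∀ x : Fin k, x ≠ i₀ →
      ((τ c')⁻¹ * τ c₀) x.castSucc = (((σ c')⁻¹ * σ c₀) x).castSucc := by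
    intro c' hc' x hx0
    rw [Equiv.Perm.mul_apply, h3 x hx0, hinv c' hc', Equiv.Perm.mul_apply]
  have hval3 : ∀ c, c ≠ c₀ → ∀ x : Fin k, ((σ c₀)⁻¹ * σ c) x ≠ i₀ →
      ((τ c₀)⁻¹ * τ c) x.castSucc = (((σ c₀)⁻¹ * σ c) x).castSucc := by
    intro c hc x hy
    rw [Equiv.Perm.mul_apply, (hne c hc).1]
    have hσeq : σ c₀ (((σ c₀)⁻¹ * σ c) x) = σ c x := by
      rw [Equiv.Perm.mul_apply, Equiv.Perm.apply_inv_self]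
    rw [← hσeq, hinv₀c _ hy]
  have hval4 : ∀ c c', c ≠ c₀ → c' ≠ c₀ → ∀ x : Fin k,
      ((τ c')⁻¹ * τ c) x.castSucc = (((σ c')⁻¹ * σ c) x).castSucc := by
    intro c c' hc hc' x
    rw [Equiv.Perm.mul_apply, (hne c hc).1, hinv c' hc', Equiv.Perm.mul_apply]
  have hFwd : ∀ (c c' : Fin (D + 1)) (x : Fin k),
      (x.castSucc : Fin (k + 1)) ∈ O → ((((σ c')⁻¹ * σ c) x).castSucc : Fin (k + 1)) ∈ O := by
    intro c c' x hx
    by_cases hc : c = c₀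
    · by_cases hc' : c' = c₀
      · rw [hc, hc']
        simpa using hx
      · rw [hc]
        by_cases hx0 : x = i₀
        · rw [hx0, ← hval1 c' hc']
          exact hOmul _ hlastO _ (hGen c₀ c')
        · rw [← hval2 c' hc' x hx0]
          exact hOmul _ hx _ (hGen c₀ c')
    · by_cases hc' : c' = c₀
      · rw [hc']
        by_cases hy : ((σ c₀)⁻¹ * σ c) x = i₀
        · rw [hy]
          exact hi₀O
        · rw [← hval3 c hc x hy]
          exact hOmul _ hx _ (hGen c c₀)
      · rw [← hval4 c c' hc hc' x]
        exact hOmul _ hx _ (hGen c c')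
  have hIff : ∀ g ∈ Subgroup.closure
      {g : Equiv.Perm (Fin k) | ∃ c c' : Fin (D + 1), g = (σ c')⁻¹ * σ c},
      ∀ x : Fin k, ((x.castSucc : Fin (k + 1)) ∈ O ↔ ((g x).castSucc : Fin (k + 1)) ∈ O) := by
    intro g hg
    induction hg using Subgroup.closure_induction with
    | mem g hgmem =>
      obtain ⟨c, c', rfl⟩ := hgmem
      intro x
      constructor
      · exact hFwd c c' x
      · intro hx
        have hback := hFwd c' c (((σ c')⁻¹ * σ c) x) hx
        simpa using hback
    | one =>
      intro x
      simp
    | mul g g' hgm hgm' pg pg' =>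
      intro x
      rw [Equiv.Perm.mul_apply]
      exact (pg' x).trans (pg (g' x))
    | inv g hgm pg =>
      intro x
      have := (pg (g⁻¹ x)).symm
      rwa [Equiv.Perm.apply_inv_self] at this
  have hAll : ∀ x : Fin k, (x.castSucc : Fin (k + 1)) ∈ O := by
    intro x
    obtain ⟨g, hg, hgx⟩ := ih i₀ x
    have := (hIff g hg i₀).1 hi₀O
    rwa [hgx] at this
  have hallO : ∀ y : Fin (k + 1), y ∈ O := fun y => Fin.lastCases hlastO hAll y
  intro i j
  obtain ⟨gi, hgi, hgi'⟩ := hallO i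
  obtain ⟨gj, hgj, hgj'⟩ := hallO j
  refine ⟨gj * gi⁻¹, Subgroup.mul_mem _ hgj (Subgroup.inv_mem _ hgi), ?_⟩
  rw [Equiv.Perm.mul_apply, ← hgi', Equiv.Perm.inv_apply_self, hgj']

end AuxLemmas

/-- For `D ≥ 3`, every melonic closed graph is connected and has
degree zero. -/
theorem melonic_connected_degree_zero (D k : ℕ) (hD : 3 ≤ D)
    (σ : Fin (D + 1) → Equiv.Perm (Fin k)) (hmel : Melonic D k σ) :
    Connected D k σ ∧ degree D k σ = 0 := by
  constructor
  · induction hmel with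
    | base =>
      intro i j
      exact ⟨1, Subgroup.one_mem _, Subsingleton.elim _ _⟩
    | insert hm hins ih => exact conn_step hD hins ih
  · have htot := tot_melonic hmel
    have hcast : (totalFaces D k σ : ℚ) * 2 = 2 * D + (D : ℚ) * ((D : ℚ) - 1) * k := by
      have h2 := congrArg (fun m : ℕ => (m : ℚ)) htot
      push_cast [Nat.cast_sub (show 1 ≤ D by omega)] at h2
      linarith
    unfold degree
    have hz : (D : ℚ) + (D : ℚ) * ((D : ℚ) - 1) / 2 * k - (totalFaces D k σ : ℚ) = 0 := by
      linarith
    rw [hz, mul_zero]
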